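/- Let A be a nonnegative selfadjoint operator on K and V : M → K a contraction. Then for every x < 0 and f ∈ M, ⟪(I_M + (1+x)V*(A - xI)⁻¹V) f, f⟫ ≥ 0, i.e. Q(x) = I_M + (1+x)V*(A-xI)⁻¹V is a nonnegative selfadjoint bounded operator. -/
import Mathlib


open scoped ComplexOrder ComplexInnerProductSpace LinearPMap

private lemma stmt_8_aux (F n a t x : ℝ) (ha : 0 ≤ a) (ht : 0 ≤ t) (hn : 0 ≤ n) (hx : x < 0)
    (hF0 : 0 ≤ F) (hle : n - 2 * (x * a) + x ^ 2 * t ≤ F) :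
    0 ≤ F + (1 + x) * (a - x * t) := by
  rcases le_or_gt 0 (1 + x) with h | h
  · nlinarith [mul_nonneg ha ht]
  · nlinarith [mul_nonneg ha (by linarith : (0:ℝ) ≤ 1 - x),
      mul_nonneg ht (by linarith : (0:ℝ) ≤ -x)]

/-- Let `A` be a nonnegative selfadjoint operator on `K` and `V : M → K` a contraction.
Then for every `x < 0` the operator `Q(x) = I + (1+x)V*(A-x)⁻¹V` is a nonnegative
selfadjoint bounded operator: `⟪Q(x)f, f⟫ ≥ 0` for all `f`. -/
theorem stmt_8 {M K : Type*} [NormedAddCommGroup M] [InnerProductSpace ℂ M] [CompleteSpace M]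
    [NormedAddCommGroup K] [InnerProductSpace ℂ K] [CompleteSpace K]
    (A : K →ₗ.[ℂ] K) (hsa : IsSelfAdjoint A)
    (hnn : ∀ x : A.domain, 0 ≤ ⟪A x, (x : K)⟫)
    (V : M →L[ℂ] K) (hV : ‖V‖ ≤ 1)
    (x : ℝ) (hx : x < 0)
    (R : K →L[ℂ] K)
    (hR1 : ∀ y : K, ∃ h : R y ∈ A.domain, A ⟨R y, h⟩ - (x : ℂ) • R y = y)
    (hR2 : ∀ u : A.domain, R (A u - (x : ℂ) • (u : K)) = u)
    (Q : M →L[ℂ] M) (hQ : Q = 1 + ((1 : ℂ) + x) • (V.adjoint ∘L R ∘L V)) :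
    IsSelfAdjoint Q ∧ ∀ f : M, 0 ≤ ⟪Q f, f⟫ := by
  have hconj : (starRingEnd ℂ) ((1 : ℂ) + x) = (1 : ℂ) + x := by
    rw [map_add, map_one, Complex.conj_ofReal]
  -- A is symmetric on its domain
  have hsym : ∀ u v : A.domain, ⟪A u, (v : K)⟫ = ⟪(u : K), A v⟫ := by
    have hd := hsa.dense_domain
    have h := LinearPMap.adjoint_isFormalAdjoint (T := A) hd
    rw [LinearPMap.isSelfAdjoint_def] at hsa
    rw [hsa] at h
    exact fun u v => h u v
  -- R is symmetric
  have hRsym : (R : K →ₗ[ℂ] K).IsSymmetric := by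
    intro y z
    obtain ⟨hy, hy'⟩ := hR1 y
    obtain ⟨hz, hz'⟩ := hR1 z
    have e1 : ⟪R y, z⟫ = ⟪A ⟨R y, hy⟩, R z⟫ - (x : ℂ) * ⟪R y, R z⟫ := by
      conv_lhs => rw [← hz']
      rw [inner_sub_right, inner_smul_right,
        hsym ⟨R y, hy⟩ ⟨R z, hz⟩]
    have e2 : ⟪y, R z⟫ = ⟪A ⟨R y, hy⟩, R z⟫ - (x : ℂ) * ⟪R y, R z⟫ := by
      conv_lhs => rw [← hy']
      rw [inner_sub_left, inner_smul_left]
      simp [Complex.conj_ofReal]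
    exact e1.trans e2.symm
  have hRsa : IsSelfAdjoint R := hRsym.isSelfAdjoint
  constructor
  · rw [hQ]
    refine IsSelfAdjoint.add ?_ (IsSelfAdjoint.smul hconj (hRsa.adjoint_conj V))
    exact star_one _
  · intro f
    -- first reduce the inner product
    have hQf0 : ⟪Q f, f⟫ = ⟪f, f⟫ + ((1 : ℂ) + x) * ⟪R (V f), V f⟫ := by
      have hq : Q f = f + ((1 : ℂ) + x) • (V.adjoint (R (V f))) := by rw [hQ]; rfl
      rw [hq, inner_add_left, inner_smul_left, hconj,
        ContinuousLinearMap.adjoint_inner_left]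
    have hVf : ‖V f‖ ≤ ‖f‖ := by
      calc ‖V f‖ ≤ ‖V‖ * ‖f‖ := V.le_opNorm f
      _ ≤ 1 * ‖f‖ := by nlinarith [norm_nonneg f]
      _ = ‖f‖ := one_mul _
    set g : K := V f with hgdef
    obtain ⟨hm, hgu⟩ := hR1 g
    set u : A.domain := ⟨R g, hm⟩ with hu
    have hru : R g = (u : K) := rfl
    rw [hru] at hgu hQf0
    -- hgu : ↑A u - x • ↑u = g
    have hAuu := hnn u
    rw [Complex.nonneg_iff] at hAuu
    set a : ℝ := (⟪A u, (u : K)⟫).re with ha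
    have hAa : ⟪A u, (u : K)⟫ = (a : ℂ) := by
      apply Complex.ext
      · simp [ha]
      · simp [← hAuu.2]
    set t : ℝ := ‖(u : K)‖ ^ 2 with ht
    have hA0 : 0 ≤ a := hAuu.1
    have ht0 : 0 ≤ t := by positivity
    have huu : ⟪(u : K), (u : K)⟫ = ((t : ℝ) : ℂ) := by
      rw [ht]; exact_mod_cast inner_self_eq_norm_sq_to_K (𝕜 := ℂ) (u : K)
    have hRVf : ⟪(u : K), g⟫ = ((a - x * t : ℝ) : ℂ) := by
      rw [← hgu, inner_sub_right, inner_smul_right, ← hsym u u, hAa, huu]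
      push_cast
      ring
    set n : ℝ := ‖(A u : K)‖ ^ 2 with hn
    have hn0 : 0 ≤ n := by positivity
    have hVf2 : ‖g‖ ^ 2 = n - 2 * (x * a) + x ^ 2 * t := by
      rw [← hgu, @norm_sub_sq ℂ]
      have h1 : RCLike.re ⟪(A u : K), (x : ℂ) • (u : K)⟫ = x * a := by
        rw [inner_smul_right, hAa]
        simp
      have h2 : ‖(x : ℂ) • (u : K)‖ ^ 2 = x ^ 2 * t := by
        rw [norm_smul, ht, mul_pow]
        simp [sq_abs]
      rw [h1, h2, hn]
    have hVff : ‖g‖ ^ 2 ≤ ‖f‖ ^ 2 := by nlinarith [norm_nonneg g]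
    have hff : ⟪f, f⟫ = ((‖f‖ ^ 2 : ℝ) : ℂ) := by
      exact_mod_cast inner_self_eq_norm_sq_to_K (𝕜 := ℂ) f
    have hQf : ⟪Q f, f⟫ = ((‖f‖ ^ 2 + (1 + x) * (a - x * t) : ℝ) : ℂ) := by
      rw [hQf0, hRVf, hff]
      push_cast
      ring
    rw [hQf, Complex.zero_le_real]
    exact stmt_8_aux _ n a t x hA0 ht0 hn0 hx (by positivity) (by linarith)
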